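/- arXiv:1005.4404 — 6 statements merged into one kernel-verified Lean document; each statement's English description precedes it below -/
import Mathlib

section
/- Let r ∈ (1, √2] and let φ_r : M₂(ℂ) → M₂(ℂ) be the Schur multiplication map φ_r(A) = M • A (entrywise product) where M is the 2×2 matrix with diagonal entries 1, (1,2)-entry r(1+i)/2, and (2,1)-entry r(1−i)/2. Then for every t ≥ 0, the map φ_r(I + t φ_r)^{-1} is completely positive if and only if t ≤ (2 − r²)/(2r(r−1)). In particular, φ_r is completely positive but not q-positive. -/
open Matrix Filter
open scoped Matrix.Norms.L2Operator ComplexOrder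

noncomputable section

def IsCompletelyPositive {n : Type*} [Fintype n] [DecidableEq n]
    (φ : Matrix n n ℂ →ₗ[ℂ] Matrix n n ℂ) : Prop :=
  ∀ (k : ℕ) (A : Matrix (Fin k × n) (Fin k × n) ℂ), A.PosSemidef →
    Matrix.PosSemidef (Matrix.of fun p q : Fin k × n =>
      φ (Matrix.of fun a b => A (p.1, a) (q.1, b)) p.2 q.2)

def Inv2 {n : Type*} [Fintype n] [DecidableEq n]
    (f g : Matrix n n ℂ →ₗ[ℂ] Matrix n n ℂ) : Prop :=
  f ∘ₗ g = LinearMap.id ∧ g ∘ₗ f = LinearMap.id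

def QPositive {n : Type*} [Fintype n] [DecidableEq n]
    (φ : Matrix n n ℂ →ₗ[ℂ] Matrix n n ℂ) : Prop :=
  (∀ c : ℝ, c < 0 → ¬ Module.End.HasEigenvalue φ (c : ℂ)) ∧
  ∀ t : ℝ, 0 ≤ t → ∃ ψ, Inv2 (LinearMap.id + (t : ℂ) • φ) ψ ∧
    IsCompletelyPositive (φ ∘ₗ ψ)

def toC {n : Type*} [Fintype n] [DecidableEq n]
    (φ : Matrix n n ℂ →ₗ[ℂ] Matrix n n ℂ) : Matrix n n ℂ →L[ℂ] Matrix n n ℂ :=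
  LinearMap.toContinuousLinearMap φ

def conjMap {n : Type*} [Fintype n] [DecidableEq n]
    (φ : Matrix n n ℂ →ₗ[ℂ] Matrix n n ℂ) (U : Matrix n n ℂ) :
    Matrix n n ℂ →ₗ[ℂ] Matrix n n ℂ where
  toFun A := Uᴴ * φ (U * A * Uᴴ) * U
  map_add' A B := by simp [Matrix.mul_add, Matrix.add_mul]
  map_smul' c A := by simp [Matrix.mul_smul, Matrix.smul_mul]

/-- Schur (Hadamard) multiplication by a fixed matrix, as a linear map. -/
def schurMap {n : Type*} [Fintype n] [DecidableEq n] (M : Matrix n n ℂ) :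
    Matrix n n ℂ →ₗ[ℂ] Matrix n n ℂ where
  toFun A := Matrix.of fun i j => M i j * A i j
  map_add' A B := by ext i j; simp [Matrix.add_apply]; ring
  map_smul' c A := by ext i j; simp [Matrix.smul_apply]; ring

/-- A state on `Mₙ(ℂ)`. -/
def IsState {n : Type*} [Fintype n] [DecidableEq n]
    (ρ : Matrix n n ℂ →ₗ[ℂ] ℂ) : Prop :=
  ρ 1 = 1 ∧ ∀ A, A.PosSemidef → ∃ r : ℝ, 0 ≤ r ∧ ρ A = (r : ℂ)

def IsProjection {n : Type*} [Fintype n] [DecidableEq n] (P : Matrix n n ℂ) : Prop :=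
  P.IsHermitian ∧ P * P = P

/-- φ ≥_q ψ. -/
def QSub {n : Type*} [Fintype n] [DecidableEq n]
    (φ ψ : Matrix n n ℂ →ₗ[ℂ] Matrix n n ℂ) : Prop :=
  ∀ t : ℝ, 0 ≤ t → ∀ χ₁ χ₂, Inv2 (LinearMap.id + (t : ℂ) • φ) χ₁ →
    Inv2 (LinearMap.id + (t : ℂ) • ψ) χ₂ →
    IsCompletelyPositive (φ ∘ₗ χ₁ - ψ ∘ₗ χ₂)

def QPure {n : Type*} [Fintype n] [DecidableEq n]
    (φ : Matrix n n ℂ →ₗ[ℂ] Matrix n n ℂ) : Prop :=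
  QPositive φ ∧ ∀ ψ, QPositive ψ → QSub φ ψ →
    (ψ = 0 ∨ ∃ s : ℝ, 0 ≤ s ∧ ∀ χ, Inv2 (LinearMap.id + (s : ℂ) • φ) χ → ψ = φ ∘ₗ χ)

/-- The block map `[[A,B],[C,D]] ↦ [[φ(A), σ(B)],[σ*(C), Ψ(D)]]`. -/
def cornerMap {n k : Type*} [Fintype n] [Fintype k] [DecidableEq n] [DecidableEq k]
    (φ : Matrix n n ℂ →ₗ[ℂ] Matrix n n ℂ) (Ψ : Matrix k k ℂ →ₗ[ℂ] Matrix k k ℂ)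
    (σ : Matrix n k ℂ →ₗ[ℂ] Matrix n k ℂ) :
    Matrix (n ⊕ k) (n ⊕ k) ℂ →ₗ[ℂ] Matrix (n ⊕ k) (n ⊕ k) ℂ where
  toFun M := Matrix.fromBlocks (φ M.toBlocks₁₁) (σ M.toBlocks₁₂)
      ((σ (M.toBlocks₂₁)ᴴ)ᴴ) (Ψ M.toBlocks₂₂)
  map_add' M N := by
    have h11 : (M + N).toBlocks₁₁ = M.toBlocks₁₁ + N.toBlocks₁₁ := rfl
    have h12 : (M + N).toBlocks₁₂ = M.toBlocks₁₂ + N.toBlocks₁₂ := rfl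
    have h21 : (M + N).toBlocks₂₁ = M.toBlocks₂₁ + N.toBlocks₂₁ := rfl
    have h22 : (M + N).toBlocks₂₂ = M.toBlocks₂₂ + N.toBlocks₂₂ := rfl
    simp only [h11, h12, h21, h22, map_add, conjTranspose_add, Matrix.fromBlocks_add]
  map_smul' c M := by
    have h11 : (c • M).toBlocks₁₁ = c • M.toBlocks₁₁ := rfl
    have h12 : (c • M).toBlocks₁₂ = c • M.toBlocks₁₂ := rfl
    have h21 : (c • M).toBlocks₂₁ = c • M.toBlocks₂₁ := rfl
    have h22 : (c • M).toBlocks₂₂ = c • M.toBlocks₂₂ := rfl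
    simp only [h11, h12, h21, h22, RingHom.id_apply, _root_.map_smul,
      conjTranspose_smul, star_star, Matrix.fromBlocks_smul]

/-- The diagonal-part map on `M₂(ℂ)`. -/
def diagMap : Matrix (Fin 2) (Fin 2) ℂ →ₗ[ℂ] Matrix (Fin 2) (Fin 2) ℂ where
  toFun A := Matrix.diagonal fun i => A i i
  map_add' A B := by ext i j; by_cases h : i = j <;> simp [Matrix.diagonal, h]
  map_smul' c A := by ext i j; by_cases h : i = j <;> simp [Matrix.diagonal, h]


section Aux
open scoped ComplexOrder

/-- Schur product theorem. -/
lemma hadamard_psd' {n : Type*} [Fintype n] [DecidableEq n]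
    {A B : Matrix n n ℂ} (hA : A.PosSemidef) (hB : B.PosSemidef) :
    (Matrix.of fun i j => A i j * B i j).PosSemidef := by
  open scoped MatrixOrder in
  obtain ⟨C, hC⟩ := CStarAlgebra.nonneg_iff_eq_star_mul_self.mp hB.nonneg
  rw [star_eq_conjTranspose] at hC
  refine Matrix.posSemidef_iff_dotProduct_mulVec.mpr ⟨?_, ?_⟩
  · ext i j
    simp only [conjTranspose_apply, of_apply, star_mul']
    rw [hA.1.apply, hB.1.apply]
  · intro x
    have key : star x ⬝ᵥ (Matrix.of fun i j => A i j * B i j) *ᵥ x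
        = ∑ k, star (fun i => C k i * x i) ⬝ᵥ A *ᵥ (fun i => C k i * x i) := by
      subst hC
      simp only [dotProduct, mulVec, of_apply, Matrix.mul_apply, conjTranspose_apply,
        Pi.star_apply, Finset.mul_sum, Finset.sum_mul, star_mul']
      symm
      rw [Finset.sum_comm]
      refine Finset.sum_congr rfl fun i _ => ?_
      rw [Finset.sum_comm]
      refine Finset.sum_congr rfl fun j _ => Finset.sum_congr rfl fun k _ => ?_
      ring
    rw [key]
    exact Finset.sum_nonneg fun k _ => hA.dotProduct_mulVec_nonneg _

lemma psd2_iff (a : ℝ) (b : ℂ) :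
    (!![(a:ℂ), b; (starRingEnd ℂ) b, (a:ℂ)]).PosSemidef ↔ ‖b‖ ≤ a := by
  have h1 : (starRingEnd ℂ) b * b = (‖b‖ : ℂ)^2 := by
    rw [← Complex.normSq_eq_conj_mul_self, Complex.normSq_eq_norm_sq]; push_cast; ring
  constructor
  · intro h
    rcases eq_or_ne b 0 with hb | hb
    · have h0 := h.dotProduct_mulVec_nonneg ![1, 0]
      simp [dotProduct, mulVec, Fin.sum_univ_two] at h0
      simpa [hb] using h0
    · have h2 := h.dotProduct_mulVec_nonneg ![b, -(‖b‖ : ℂ)]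
      have key : star ![b, -(‖b‖ : ℂ)] ⬝ᵥ
          (!![(a:ℂ), b; (starRingEnd ℂ) b, (a:ℂ)]) *ᵥ ![b, -(‖b‖ : ℂ)]
          = ((2 * ‖b‖ ^ 2 * (a - ‖b‖) : ℝ) : ℂ) := by
        simp [dotProduct, mulVec, Fin.sum_univ_two, Complex.star_def, Complex.conj_ofReal]
        linear_combination ((a:ℂ) - 2*‖b‖) * h1
      rw [key, Complex.zero_le_real] at h2
      have hb' : 0 < ‖b‖ := norm_pos_iff.mpr hb
      nlinarith [mul_pos hb' hb']
  · intro habs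
    have ha : 0 ≤ a := le_trans (norm_nonneg b) habs
    refine Matrix.posSemidef_iff_dotProduct_mulVec.mpr ⟨?_, ?_⟩
    · ext i j
      fin_cases i <;> fin_cases j <;>
        simp [Matrix.conjTranspose_apply, Complex.conj_ofReal]
    · intro x
      set x0 := x 0 with hx0; set x1 := x 1 with hx1
      have k0 : (starRingEnd ℂ) x0 * x0 = ((Complex.normSq x0 : ℝ) : ℂ) := by
        rw [Complex.normSq_eq_conj_mul_self]
      have k1 : (starRingEnd ℂ) x1 * x1 = ((Complex.normSq x1 : ℝ) : ℂ) := by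
        rw [Complex.normSq_eq_conj_mul_self]
      set w := (starRingEnd ℂ) x0 * b * x1 with hw
      have kw : w + (starRingEnd ℂ) w = 2 * ((w.re : ℝ) : ℂ) := by
        rw [Complex.add_conj]; push_cast; ring
      have kconj : (starRingEnd ℂ) w
          = x0 * (starRingEnd ℂ) b * (starRingEnd ℂ) x1 := by
        rw [hw]; simp [_root_.map_mul]
      have key : star x ⬝ᵥ (!![(a:ℂ), b; (starRingEnd ℂ) b, (a:ℂ)]) *ᵥ x
          = ((a * (Complex.normSq x0 + Complex.normSq x1) + 2 * w.re : ℝ) : ℂ) := by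
        simp only [dotProduct, mulVec, Fin.sum_univ_two, Pi.star_apply, Complex.star_def,
          Matrix.of_apply, Matrix.cons_val', Matrix.cons_val_zero, Matrix.cons_val_one,
          Matrix.head_cons, Matrix.empty_val', Matrix.cons_val_fin_one, Matrix.head_fin_const,
          ← hx0, ← hx1]
        push_cast
        linear_combination (a:ℂ) * k0 + (a:ℂ) * k1 + kw - kconj
      rw [key, Complex.zero_le_real]
      have hwre : -(‖x0‖ * ‖b‖ * ‖x1‖) ≤ w.re := by
        have h3 : ‖w‖ = ‖x0‖ * ‖b‖ * ‖x1‖ := by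
          simp [hw, _root_.map_mul]
        rw [← h3]; exact (abs_le.1 (Complex.abs_re_le_norm w)).1
      have hn0 : Complex.normSq x0 = ‖x0‖ ^ 2 := Complex.normSq_eq_norm_sq x0
      have hn1 : Complex.normSq x1 = ‖x1‖ ^ 2 := Complex.normSq_eq_norm_sq x1
      rw [hn0, hn1]
      nlinarith [sq_nonneg (‖x0‖ - ‖x1‖),
        mul_nonneg (sub_nonneg.2 habs)
          (add_nonneg (sq_nonneg (‖x0‖)) (sq_nonneg (‖x1‖))),
        mul_nonneg (norm_nonneg b) (sq_nonneg (‖x0‖ - ‖x1‖))]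

lemma schur_cp {n : Type*} [Fintype n] [DecidableEq n]
    {N : Matrix n n ℂ} (hN : N.PosSemidef) : IsCompletelyPositive (schurMap N) := by
  intro k A hA
  have h1 : (N.submatrix (Prod.snd : Fin k × n → n) Prod.snd).PosSemidef :=
    hN.submatrix _
  have h2 := hadamard_psd' h1 hA
  convert h2 using 2
  rfl

lemma schur_cp_psd {n : Type*} [Fintype n] [DecidableEq n]
    {N : Matrix n n ℂ} (h : IsCompletelyPositive (schurMap N)) : N.PosSemidef := by
  have hones : (Matrix.of fun (_ _ : Fin 1 × n) => (1:ℂ)).PosSemidef := by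
    have h2 := Matrix.posSemidef_conjTranspose_mul_self
      (Matrix.of fun (_ : Fin 1) (_ : Fin 1 × n) => (1:ℂ))
    convert h2 using 1
    ext p q
    simp [Matrix.mul_apply, Matrix.conjTranspose_apply]
  have h2 := h 1 _ hones
  have h3 := h2.submatrix (fun i : n => ((0 : Fin 1), i))
  convert h3 using 1
  ext i j
  simp [schurMap, Matrix.submatrix_apply]

lemma schur_comp {n : Type*} [Fintype n] [DecidableEq n] (M N : Matrix n n ℂ) :
    schurMap M ∘ₗ schurMap N = schurMap (Matrix.of fun i j => M i j * N i j) := by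
  apply LinearMap.ext; intro A
  ext i j
  simp [schurMap, mul_assoc]

lemma inv2_unique {n : Type*} [Fintype n] [DecidableEq n]
    {f g g' : Matrix n n ℂ →ₗ[ℂ] Matrix n n ℂ} (h : Inv2 f g) (h' : Inv2 f g') :
    g = g' := by
  calc g = g ∘ₗ (f ∘ₗ g') := by rw [h'.1, LinearMap.comp_id]
    _ = (g ∘ₗ f) ∘ₗ g' := by rw [LinearMap.comp_assoc]
    _ = g' := by rw [h.2, LinearMap.id_comp]

lemma inv2_schur {n : Type*} [Fintype n] [DecidableEq n]
    {M : Matrix n n ℂ} {t : ℂ} (h : ∀ i j, 1 + t * M i j ≠ 0) :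
    Inv2 (LinearMap.id + t • schurMap M)
      (schurMap (Matrix.of fun i j => (1 + t * M i j)⁻¹)) := by
  constructor <;>
  · apply LinearMap.ext; intro A
    ext i j
    simp [schurMap, Matrix.add_apply, Matrix.smul_apply]
    field_simp [h i j]

end Aux

set_option maxHeartbeats 1600000 in
/-- for `r ∈ (1, √2]` and the Schur map `φ_r`, the map
`φ_r(I + t φ_r)⁻¹` is completely positive iff `t ≤ (2 - r²)/(2r(r-1))`;
in particular `φ_r` is completely positive but not q-positive. -/
theorem stmt_0 (r : ℝ) (hr : r ∈ Set.Ioc 1 (Real.sqrt 2))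
    (M : Matrix (Fin 2) (Fin 2) ℂ)
    (hM : M = !![1, (r : ℂ) * (1 + Complex.I) / 2;
                 (r : ℂ) * (1 - Complex.I) / 2, 1]) :
    (∀ t : ℝ, 0 ≤ t → ∀ ψ, Inv2 (LinearMap.id + (t : ℂ) • schurMap M) ψ →
      (IsCompletelyPositive (schurMap M ∘ₗ ψ) ↔ t ≤ (2 - r ^ 2) / (2 * r * (r - 1)))) ∧
    IsCompletelyPositive (schurMap M) ∧ ¬ QPositive (schurMap M) :=  by
  obtain ⟨hr1, hr2⟩ := hr
  have hrpos : (0:ℝ) < r := lt_trans one_pos hr1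
  have hr2' : r^2 ≤ 2 := by
    nlinarith [Real.sq_sqrt (by norm_num : (0:ℝ) ≤ 2), Real.sqrt_nonneg 2]
  have hM00 : M 0 0 = 1 := by rw [hM]; simp
  have hM11 : M 1 1 = 1 := by rw [hM]; simp
  have hM01 : M 0 1 = (r:ℂ)*(1+Complex.I)/2 := by rw [hM]; simp
  have hM10 : M 1 0 = (starRingEnd ℂ) (M 0 1) := by
    rw [hM01, hM]
    simp [map_div₀, Complex.conj_I, map_ofNat]
    ring_nf
    simp
  have hbre : (M 0 1).re = r/2 := by
    rw [hM01]; simp [Complex.div_re, Complex.mul_re, Complex.normSq_apply]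
  have hbim : (M 0 1).im = r/2 := by
    rw [hM01]; simp [Complex.div_im, Complex.mul_im, Complex.normSq_apply]
  have hb're : (M 1 0).re = r/2 := by rw [hM10]; simp [hbre]
  have hb'im : (M 1 0).im = -(r/2) := by rw [hM10]; simp [hbim]
  have hXsq : (‖(M 0 1)‖)^2 = r^2/2 := by
    rw [Complex.sq_norm, Complex.normSq_apply, hbre, hbim]; ring
  have hX0 : 0 ≤ ‖(M 0 1)‖ := norm_nonneg _
  have hden : (0:ℝ) < 2*r*(r-1) := by nlinarith
  have main : ∀ t : ℝ, 0 ≤ t → ∀ ψ, Inv2 (LinearMap.id + (t : ℂ) • schurMap M) ψ →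
      (IsCompletelyPositive (schurMap M ∘ₗ ψ) ↔ t ≤ (2 - r ^ 2) / (2 * r * (r - 1))) := by
    intro t ht ψ hψ
    have h1t : (0:ℝ) < 1 + t := by linarith
    have hnz : ∀ i j, (1:ℂ) + (t:ℂ) * M i j ≠ 0 := by
      intro i j h0
      have h0re := congrArg Complex.re h0
      fin_cases i <;> fin_cases j <;>
        simp [hM00, hM11, Complex.add_re, Complex.mul_re,
          hbre, hbim, hb're, hb'im] at h0re <;>
        nlinarith [ht, hrpos]
    have hψeq : ψ = schurMap (Matrix.of fun i j => ((1:ℂ) + (t:ℂ) * M i j)⁻¹) :=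
      inv2_unique hψ (inv2_schur hnz)
    set c : ℝ := (1+t)⁻¹ with hc
    set d : ℂ := M 0 1 * ((1:ℂ) + (t:ℂ) * M 0 1)⁻¹ with hd
    have hcomp : schurMap M ∘ₗ ψ
        = schurMap !![((c:ℝ):ℂ), d; (starRingEnd ℂ) d, ((c:ℝ):ℂ)] := by
      rw [hψeq, schur_comp]
      congr 1
      ext i j
      fin_cases i <;> fin_cases j
      · first
          | (simp [hM00, hc]; push_cast; ring)
          | simp [hM00, hc]
      · simp [hd]
      · first
          | (simp [hM10, hd, _root_.map_mul, map_inv₀, map_add, Complex.conj_ofReal]; ring)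
          | simp [hM10, hd, _root_.map_mul, map_inv₀, map_add, Complex.conj_ofReal]
      · first
          | (simp [hM11, hc]; push_cast; ring)
          | simp [hM11, hc]
    rw [hcomp]
    have hiff : IsCompletelyPositive
        (schurMap !![((c:ℝ):ℂ), d; (starRingEnd ℂ) d, ((c:ℝ):ℂ)])
        ↔ ‖d‖ ≤ c := by
      rw [← psd2_iff c d]
      exact ⟨schur_cp_psd, schur_cp⟩
    rw [hiff]
    set z := (1:ℂ) + (t:ℂ) * M 0 1 with hz
    have hz0 : z ≠ 0 := hnz 0 1
    have hZpos : 0 < ‖z‖ := norm_pos_iff.mpr hz0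
    have hzre : z.re = 1 + t*(r/2) := by
      rw [hz]; simp [Complex.add_re, Complex.mul_re, hbre, hbim]
    have hzim : z.im = t*(r/2) := by
      rw [hz]; simp [Complex.add_im, Complex.mul_im, hbre, hbim]
    have hZsq : (‖z‖)^2 = (1+t*(r/2))^2 + (t*(r/2))^2 := by
      rw [Complex.sq_norm, Complex.normSq_apply, hzre, hzim]; ring
    have habsd : ‖d‖ = ‖(M 0 1)‖ / ‖z‖ := by
      rw [hd, norm_mul, norm_inv, div_eq_mul_inv]
    rw [habsd, hc, inv_eq_one_div, div_le_div_iff₀ hZpos h1t, one_mul]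
    rw [← pow_le_pow_iff_left₀ (mul_nonneg hX0 h1t.le) hZpos.le two_ne_zero]
    rw [mul_pow, hXsq, hZsq, le_div_iff₀ hden]
    constructor
    · intro h
      nlinarith [h, ht, hrpos]
    · intro h
      nlinarith [h, ht, hrpos]
  refine ⟨main, ?_, ?_⟩
  · have hMform : M = !![((1:ℝ):ℂ), M 0 1; (starRingEnd ℂ) (M 0 1), ((1:ℝ):ℂ)] := by
      ext i j
      fin_cases i <;> fin_cases j <;> simp [hM00, hM10, hM11]
    have hb1 : ‖(M 0 1)‖ ≤ 1 := by
      nlinarith [hXsq, hX0, sq_nonneg (‖(M 0 1)‖ - 1)]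
    have hcpM : IsCompletelyPositive
        (schurMap !![((1:ℝ):ℂ), M 0 1; (starRingEnd ℂ) (M 0 1), ((1:ℝ):ℂ)]) :=
      schur_cp ((psd2_iff 1 (M 0 1)).2 hb1)
    rwa [← hMform] at hcpM
  · intro hQ
    set t0 := (2 - r^2)/(2*r*(r-1)) with ht0def
    have ht0 : 0 ≤ t0 := div_nonneg (by nlinarith) hden.le
    obtain ⟨ψ, hinv, hcp⟩ := hQ.2 (t0+1) (by linarith)
    have hle := (main (t0+1) (by linarith) ψ hinv).1 hcp
    linarith
end
end

section
/- Let φ : Mₙ(ℂ) → Mₙ(ℂ) be a nonzero q-positive map such that ‖tφ(I + tφ)^{-1}‖ < 1 for all t > 0. Then the maps tφ(I + tφ)^{-1} converge in norm as t → ∞ to a unique map L_φ, and L_φ is completely positive, has norm 1, satisfies L_φ ∘ φ = φ ∘ L_φ = φ, L_φ² = L_φ, range(L_φ) = range(φ), and ker(L_φ) = ker(φ). -/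
open Matrix Filter
open scoped Matrix.Norms.L2Operator ComplexOrder

noncomputable section

section AuxStmt1

variable {m : Type*} [Fintype m] [DecidableEq m]

lemma toC_comp (f g : Matrix m m ℂ →ₗ[ℂ] Matrix m m ℂ) :
    toC (f ∘ₗ g) = (toC f).comp (toC g) := rfl

lemma toC_apply (f : Matrix m m ℂ →ₗ[ℂ] Matrix m m ℂ) (x : Matrix m m ℂ) :
    toC f x = f x := rfl

lemma toC_injective : Function.Injective (toC (n := m)) :=
  fun _ _ h => LinearMap.toContinuousLinearMap.injective h

lemma toC_sub (f g : Matrix m m ℂ →ₗ[ℂ] Matrix m m ℂ) :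
    toC (f - g) = toC f - toC g := by
  ext x; rfl

lemma toC_neg (f : Matrix m m ℂ →ₗ[ℂ] Matrix m m ℂ) :
    toC (-f) = -(toC f) := by
  ext x; rfl

lemma toC_smul (c : ℂ) (f : Matrix m m ℂ →ₗ[ℂ] Matrix m m ℂ) :
    toC (c • f) = c • toC f := by
  ext x; rfl

lemma posSemidef_real_smul {k : Type*} [Fintype k] {B : Matrix k k ℂ} {t : ℝ}
    (hB : B.PosSemidef) (ht : 0 ≤ t) : ((t : ℂ) • B).PosSemidef := by
  rw [Matrix.posSemidef_iff_dotProduct_mulVec]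
  constructor
  · have h1 := hB.1
    unfold Matrix.IsHermitian at h1 ⊢
    rw [Matrix.conjTranspose_smul, h1]
    congr 1
    simp [Complex.star_def, Complex.conj_ofReal]
  · intro x
    rw [Matrix.smul_mulVec, dotProduct_smul, smul_eq_mul]
    exact mul_nonneg (Complex.zero_le_real.mpr ht) (hB.dotProduct_mulVec_nonneg x)

end AuxStmt1

set_option maxHeartbeats 1600000 in
/-- existence and properties of the limit `L_φ = lim_t tφ(I+tφ)⁻¹`. -/
theorem stmt_1 {n : ℕ} (φ : Matrix (Fin n) (Fin n) ℂ →ₗ[ℂ] Matrix (Fin n) (Fin n) ℂ)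
    (hφ0 : φ ≠ 0) (hq : QPositive φ)
    (inv : ℝ → (Matrix (Fin n) (Fin n) ℂ →ₗ[ℂ] Matrix (Fin n) (Fin n) ℂ))
    (hinv : ∀ t : ℝ, 0 ≤ t → Inv2 (LinearMap.id + (t : ℂ) • φ) (inv t))
    (hnorm : ∀ t : ℝ, 0 < t → ‖toC ((t : ℂ) • (φ ∘ₗ inv t))‖ < 1) :
    ∃ L : Matrix (Fin n) (Fin n) ℂ →ₗ[ℂ] Matrix (Fin n) (Fin n) ℂ,
      Tendsto (fun t : ℝ => toC ((t : ℂ) • (φ ∘ₗ inv t))) atTop (nhds (toC L)) ∧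
      (∀ L', Tendsto (fun t : ℝ => toC ((t : ℂ) • (φ ∘ₗ inv t)))
        atTop (nhds (toC L')) → L' = L) ∧
      IsCompletelyPositive L ∧ ‖toC L‖ = 1 ∧
      L ∘ₗ φ = φ ∧ φ ∘ₗ L = φ ∧ L ∘ₗ L = L ∧
      LinearMap.range L = LinearMap.range φ ∧
      LinearMap.ker L = LinearMap.ker φ := by
  classical
  obtain ⟨-, hq2⟩ := hq
  -- `id + tφ` commutes with `φ`
  have hFφ : ∀ t : ℝ, (LinearMap.id + (t : ℂ) • φ) ∘ₗ φ = φ ∘ₗ (LinearMap.id + (t : ℂ) • φ) := by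
    intro t
    simp only [LinearMap.add_comp, LinearMap.comp_add, LinearMap.smul_comp,
      LinearMap.comp_smul, LinearMap.id_comp, LinearMap.comp_id]
  -- `inv t` commutes with `φ`
  have hcomm : ∀ t : ℝ, 0 ≤ t → φ ∘ₗ inv t = inv t ∘ₗ φ := by
    intro t ht
    obtain ⟨h1, h2⟩ := hinv t ht
    calc φ ∘ₗ inv t
        = ((inv t ∘ₗ (LinearMap.id + (t : ℂ) • φ)) ∘ₗ φ) ∘ₗ inv t := by
          rw [h2, LinearMap.id_comp]
      _ = inv t ∘ₗ (((LinearMap.id + (t : ℂ) • φ) ∘ₗ φ) ∘ₗ inv t) := by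
          simp only [LinearMap.comp_assoc]
      _ = inv t ∘ₗ (φ ∘ₗ ((LinearMap.id + (t : ℂ) • φ) ∘ₗ inv t)) := by
          rw [hFφ, LinearMap.comp_assoc]
      _ = inv t ∘ₗ φ := by rw [h1, LinearMap.comp_id]
  -- `ker φ² = ker φ` using the uniform norm bound
  have hker2 : ∀ x, φ (φ x) = 0 → φ x = 0 := by
    intro x hx
    by_contra hne
    have hx0 : x ≠ 0 := by rintro rfl; simp at hne
    have hφx : 0 < ‖φ x‖ := norm_pos_iff.2 hne
    have hxn : 0 < ‖x‖ := norm_pos_iff.2 hx0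
    set t : ℝ := ‖x‖ / ‖φ x‖ + 1 with hts
    have ht : 0 < t := by positivity
    have hinvx : inv t x = x - (t : ℂ) • φ x := by
      have h2 := (hinv t ht.le).2
      have key : ((LinearMap.id + (t : ℂ) • φ :
          Matrix (Fin n) (Fin n) ℂ →ₗ[ℂ] Matrix (Fin n) (Fin n) ℂ))
          (x - (t : ℂ) • φ x) = x := by
        simp only [LinearMap.add_apply, LinearMap.id_apply, LinearMap.smul_apply,
          map_sub, _root_.map_smul, hx, smul_zero, sub_zero, smul_sub]
        simp
      calc inv t x = (inv t ∘ₗ (LinearMap.id + (t : ℂ) • φ)) (x - (t : ℂ) • φ x) := by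
            rw [LinearMap.comp_apply, key]
        _ = x - (t : ℂ) • φ x := by rw [h2, LinearMap.id_apply]
    have happ : toC ((t : ℂ) • (φ ∘ₗ inv t)) x = (t : ℂ) • φ x := by
      rw [toC_apply]
      simp only [LinearMap.smul_apply, LinearMap.comp_apply, hinvx, map_sub, _root_.map_smul,
        hx, smul_zero, sub_zero]
    have hle := (toC ((t : ℂ) • (φ ∘ₗ inv t))).le_opNorm x
    rw [happ] at hle
    have h1 : ‖(t : ℂ) • φ x‖ = t * ‖φ x‖ := by
      rw [norm_smul, Complex.norm_real, Real.norm_of_nonneg ht.le]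
    have h2 : t * ‖φ x‖ = ‖x‖ + ‖φ x‖ := by
      rw [hts]; field_simp
    have hb := hnorm t ht
    nlinarith [norm_nonneg x]
  -- range and kernel of φ are complementary
  have hdisj : Disjoint (LinearMap.range φ) (LinearMap.ker φ) := by
    rw [Submodule.disjoint_def]
    rintro y ⟨x, rfl⟩ hy
    exact hker2 x (LinearMap.mem_ker.mp hy)
  have hcompl : IsCompl (LinearMap.range φ) (LinearMap.ker φ) := by
    refine ⟨hdisj, codisjoint_iff.mpr ?_⟩
    apply Submodule.eq_top_of_finrank_eq
    have h1 := Submodule.finrank_sup_add_finrank_inf_eq (LinearMap.range φ) (LinearMap.ker φ)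
    have h2 := LinearMap.finrank_range_add_finrank_ker φ
    rw [hdisj.eq_bot, finrank_bot, add_zero] at h1
    omega
  set p := LinearMap.range φ with hp
  set q := LinearMap.ker φ with hquw
  set pr := Submodule.projectionOnto p q hcompl with hpr
  set L : Matrix (Fin n) (Fin n) ℂ →ₗ[ℂ] Matrix (Fin n) (Fin n) ℂ := p.subtype ∘ₗ pr with hLdef
  have hLmem : ∀ x, L x ∈ p := fun x => (pr x).2
  have hLleft : ∀ y, (hy : y ∈ p) → L y = y := by
    intro y hy
    have := Submodule.projectionOnto_apply_left hcompl ⟨y, hy⟩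
    exact congrArg (Subtype.val) this
  have hLright : ∀ y, y ∈ q → L y = 0 := by
    intro y hy
    have := Submodule.projectionOnto_apply_of_mem_right hcompl hy
    simp [hLdef, LinearMap.comp_apply, hpr, this]
  have hLφ : L ∘ₗ φ = φ := by
    ext1 x
    exact hLleft (φ x) ⟨x, rfl⟩
  have hsubmem : ∀ x, x - L x ∈ q := by
    intro x
    have h := Submodule.projection_add_projection_eq_self hcompl x
    have hLx : L x = ((p.projectionOnto q hcompl) x : Matrix (Fin n) (Fin n) ℂ) := rfl
    have heq : x - L x = (q.projectionOnto p hcompl.symm x : Matrix (Fin n) (Fin n) ℂ) := by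
      rw [hLx, sub_eq_iff_eq_add']
      exact h.symm
    rw [heq]
    exact (q.projectionOnto p hcompl.symm x).2
  have hφL : φ ∘ₗ L = φ := by
    ext1 x
    have := LinearMap.mem_ker.mp (hsubmem x)
    rw [map_sub, sub_eq_zero] at this
    exact this.symm
  have hLL : L ∘ₗ L = L := by
    ext1 x
    exact hLleft (L x) (hLmem x)
  have hrangeL : LinearMap.range L = p := by
    apply le_antisymm
    · rintro y ⟨x, rfl⟩; exact hLmem x
    · intro y hy; exact ⟨y, hLleft y hy⟩
  have hkerL : LinearMap.ker L = q := by
    ext y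
    constructor
    · intro hy
      have h := hsubmem y
      rwa [LinearMap.mem_ker.mp hy, sub_zero] at h
    · intro hy
      exact LinearMap.mem_ker.mpr (hLright y hy)
  -- pseudo-inverse P with φ ∘ P = L
  have hmaps : ∀ x ∈ p, φ x ∈ p := fun x _ => ⟨x, rfl⟩
  set f' : p →ₗ[ℂ] p := φ.restrict hmaps with hf'
  have hinj : Function.Injective f' := by
    rw [← LinearMap.ker_eq_bot, Submodule.eq_bot_iff]
    rintro ⟨z, hz⟩ hz0
    have hφz : φ z = 0 := by
      have := congrArg (Subtype.val) (LinearMap.mem_ker.mp hz0)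
      simpa [hf', LinearMap.restrict_apply] using this
    have : z = 0 := (Submodule.disjoint_def.mp hdisj) z hz (LinearMap.mem_ker.mpr hφz)
    simp [this]
  have hsurj : Function.Surjective f' := LinearMap.injective_iff_surjective.mp hinj
  set e : p ≃ₗ[ℂ] p := LinearEquiv.ofBijective f' ⟨hinj, hsurj⟩ with he
  set P : Matrix (Fin n) (Fin n) ℂ →ₗ[ℂ] Matrix (Fin n) (Fin n) ℂ :=
    p.subtype ∘ₗ (e.symm : p →ₗ[ℂ] p) ∘ₗ pr with hP
  have hφP : φ ∘ₗ P = L := by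
    ext1 x
    have h1 : φ ((e.symm (pr x) : p) : Matrix (Fin n) (Fin n) ℂ)
        = ((f' (e.symm (pr x)) : p) : Matrix (Fin n) (Fin n) ℂ) := by
      simp [hf', LinearMap.restrict_apply]
    have h2 : f' (e.symm (pr x)) = pr x := by
      have := e.apply_symm_apply (pr x)
      exact this
    simp only [hP, hLdef, LinearMap.comp_apply, Submodule.coe_subtype,
      LinearEquiv.coe_coe]
    rw [h1, h2]
  -- the key algebraic identity and norm bound
  have hkey : ∀ t : ℝ, 0 < t →
      (t : ℂ) • (φ ∘ₗ inv t) - L = -((φ ∘ₗ inv t) ∘ₗ P) := by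
    intro t ht
    obtain ⟨h1, h2⟩ := hinv t ht.le
    have e1 : (LinearMap.id + (t : ℂ) • φ) ∘ₗ ((t : ℂ) • (φ ∘ₗ inv t)) = (t : ℂ) • φ := by
      rw [LinearMap.comp_smul, ← LinearMap.comp_assoc, hFφ, LinearMap.comp_assoc, h1,
        LinearMap.comp_id]
    have e2 : (LinearMap.id + (t : ℂ) • φ) ∘ₗ L = L + (t : ℂ) • φ := by
      rw [LinearMap.add_comp, LinearMap.id_comp, LinearMap.smul_comp, hφL]
    have e3 : (LinearMap.id + (t : ℂ) • φ) ∘ₗ ((t : ℂ) • (φ ∘ₗ inv t) - L) = -L := by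
      rw [LinearMap.comp_sub, e1, e2]; abel
    have e4 : (t : ℂ) • (φ ∘ₗ inv t) - L
        = inv t ∘ₗ ((LinearMap.id + (t : ℂ) • φ) ∘ₗ ((t : ℂ) • (φ ∘ₗ inv t) - L)) := by
      rw [← LinearMap.comp_assoc, h2, LinearMap.id_comp]
    rw [e4, e3]
    have e5 : inv t ∘ₗ (-L) = -(inv t ∘ₗ L) := by
      ext1 x; simp
    rw [e5, ← hφP, ← LinearMap.comp_assoc, hcomm t ht.le, LinearMap.comp_assoc]
  have hbound : ∀ t : ℝ, 0 < t →
      ‖toC ((t : ℂ) • (φ ∘ₗ inv t)) - toC L‖ ≤ ‖toC P‖ / t := by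
    intro t ht
    have hsub : toC ((t : ℂ) • (φ ∘ₗ inv t)) - toC L
        = toC ((t : ℂ) • (φ ∘ₗ inv t) - L) := (toC_sub _ _).symm
    rw [hsub, hkey t ht, toC_neg, ContinuousLinearMap.opNorm_neg, toC_comp]
    have hsmall : ‖toC (φ ∘ₗ inv t)‖ ≤ 1 / t := by
      have hb := hnorm t ht
      have htne : (t : ℂ) ≠ 0 := by exact_mod_cast ht.ne'
      have hid : toC (φ ∘ₗ inv t) = ((t : ℂ)⁻¹) • toC ((t : ℂ) • (φ ∘ₗ inv t)) := by
        rw [toC_smul, smul_smul, inv_mul_cancel₀ htne, one_smul]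
      rw [hid]
      have h1 : ‖((t : ℂ)⁻¹) • toC ((t : ℂ) • (φ ∘ₗ inv t))‖
          ≤ ‖((t : ℂ)⁻¹)‖ * ‖toC ((t : ℂ) • (φ ∘ₗ inv t))‖ :=
        ContinuousLinearMap.opNorm_smul_le _ _
      have h2 : ‖((t : ℂ)⁻¹)‖ = 1 / t := by
        rw [norm_inv, Complex.norm_real, Real.norm_of_nonneg ht.le, one_div]
      calc ‖((t : ℂ)⁻¹) • toC ((t : ℂ) • (φ ∘ₗ inv t))‖
          ≤ ‖((t : ℂ)⁻¹)‖ * ‖toC ((t : ℂ) • (φ ∘ₗ inv t))‖ := h1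
        _ ≤ (1 / t) * 1 := by
            rw [h2]
            exact mul_le_mul_of_nonneg_left hb.le (by positivity)
        _ = 1 / t := mul_one _
    calc ‖(toC (φ ∘ₗ inv t)).comp (toC P)‖ ≤ ‖toC (φ ∘ₗ inv t)‖ * ‖toC P‖ :=
          ContinuousLinearMap.opNorm_comp_le _ _
      _ ≤ (1 / t) * ‖toC P‖ := by
          have h0 : (0:ℝ) ≤ ‖toC P‖ := norm_nonneg (toC P)
          exact mul_le_mul_of_nonneg_right hsmall h0
      _ = ‖toC P‖ / t := by ring
  -- convergence
  have htend : Tendsto (fun t : ℝ => toC ((t : ℂ) • (φ ∘ₗ inv t))) atTop (nhds (toC L)) := by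
    refine (tendsto_iff_dist_tendsto_zero (f := fun t : ℝ => toC ((t : ℂ) • (φ ∘ₗ inv t)))
      (x := atTop) (a := toC L)).mpr ?_
    refine squeeze_zero' (g := fun s : ℝ => ‖toC P‖ / s)
      (Eventually.of_forall fun s => dist_nonneg)
      (eventually_atTop.mpr ⟨1, fun s hs => ?_⟩)
      (Tendsto.div_atTop tendsto_const_nhds tendsto_id)
    have hd : dist (toC ((s : ℂ) • (φ ∘ₗ inv s))) (toC L)
        = ‖toC ((s : ℂ) • (φ ∘ₗ inv s)) - toC L‖ :=
      dist_eq_norm (toC ((s : ℂ) • (φ ∘ₗ inv s))) (toC L)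
    rw [hd]
    exact hbound s (lt_of_lt_of_le one_pos hs)
  -- complete positivity of the approximants
  have hinv_unique : ∀ t : ℝ, 0 ≤ t → ∀ ψ, Inv2 (LinearMap.id + (t : ℂ) • φ) ψ → ψ = inv t := by
    intro t ht ψ hψ
    have h := hinv t ht
    calc ψ = ψ ∘ₗ ((LinearMap.id + (t : ℂ) • φ) ∘ₗ inv t) := by rw [h.1, LinearMap.comp_id]
      _ = (ψ ∘ₗ (LinearMap.id + (t : ℂ) • φ)) ∘ₗ inv t := by rw [LinearMap.comp_assoc]
      _ = inv t := by rw [hψ.2, LinearMap.id_comp]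
  have hCPt : ∀ t : ℝ, 0 ≤ t → IsCompletelyPositive ((t : ℂ) • (φ ∘ₗ inv t)) := by
    intro t ht
    obtain ⟨ψ, hψ, hcp⟩ := hq2 t ht
    rw [hinv_unique t ht ψ hψ] at hcp
    intro k A hA
    have h := hcp k A hA
    have heq : (Matrix.of fun pp qq : Fin k × Fin n =>
        ((t : ℂ) • (φ ∘ₗ inv t)) (Matrix.of fun a b => A (pp.1, a) (qq.1, b)) pp.2 qq.2)
        = (t : ℂ) • (Matrix.of fun pp qq : Fin k × Fin n =>
        (φ ∘ₗ inv t) (Matrix.of fun a b => A (pp.1, a) (qq.1, b)) pp.2 qq.2) := by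
      ext pp qq
      simp [Matrix.smul_apply]
    rw [heq]
    exact posSemidef_real_smul h ht
  -- entrywise convergence of applied maps
  have hev : ∀ (M : Matrix (Fin n) (Fin n) ℂ) (i j : Fin n),
      Tendsto (fun t : ℝ => toC ((t : ℂ) • (φ ∘ₗ inv t)) M i j) atTop (nhds (toC L M i j)) := by
    intro M i j
    have c1 : Continuous fun T : Matrix (Fin n) (Fin n) ℂ →L[ℂ] Matrix (Fin n) (Fin n) ℂ =>
        T M i j := by
      have ha : Continuous fun T : Matrix (Fin n) (Fin n) ℂ →L[ℂ] Matrix (Fin n) (Fin n) ℂ =>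
          T M := (ContinuousLinearMap.apply ℂ (Matrix (Fin n) (Fin n) ℂ) M).continuous
      have hb : Continuous fun N : Matrix (Fin n) (Fin n) ℂ => N i j :=
        (LinearMap.toContinuousLinearMap (Matrix.entryLinearMap ℂ ℂ i j)).continuous
      exact hb.comp ha
    exact (c1.tendsto (toC L)).comp htend
  -- complete positivity of L
  have hCPL : IsCompletelyPositive L := by
    intro k A hA
    rw [Matrix.posSemidef_iff_dotProduct_mulVec]
    have hBt : ∀ t : ℝ, 0 ≤ t → (Matrix.of fun pp qq : Fin k × Fin n =>
        ((t : ℂ) • (φ ∘ₗ inv t)) (Matrix.of fun a b => A (pp.1, a) (qq.1, b)) pp.2 qq.2).PosSemidef :=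
      fun t ht => hCPt t ht k A hA
    have htendE : ∀ pp qq : Fin k × Fin n,
        Tendsto (fun t : ℝ => ((t : ℂ) • (φ ∘ₗ inv t))
            (Matrix.of fun a b => A (pp.1, a) (qq.1, b)) pp.2 qq.2) atTop
          (nhds (L (Matrix.of fun a b => A (pp.1, a) (qq.1, b)) pp.2 qq.2)) :=
      fun pp qq => hev (Matrix.of fun a b => A (pp.1, a) (qq.1, b)) pp.2 qq.2
    constructor
    · -- Hermitian
      ext pp qq
      rw [Matrix.conjTranspose_apply, Matrix.of_apply, Matrix.of_apply]
      have h1 : Tendsto (fun t : ℝ => star (((t : ℂ) • (φ ∘ₗ inv t))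
          (Matrix.of fun a b => A (qq.1, a) (pp.1, b)) qq.2 pp.2)) atTop
          (nhds (star (L (Matrix.of fun a b => A (qq.1, a) (pp.1, b)) qq.2 pp.2))) :=
        (htendE qq pp).star
      have h2 : ∀ᶠ t : ℝ in atTop, star (((t : ℂ) • (φ ∘ₗ inv t))
          (Matrix.of fun a b => A (qq.1, a) (pp.1, b)) qq.2 pp.2)
          = ((t : ℂ) • (φ ∘ₗ inv t)) (Matrix.of fun a b => A (pp.1, a) (qq.1, b)) pp.2 qq.2 := by
        filter_upwards [eventually_ge_atTop (0 : ℝ)] with t ht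
        have := (hBt t ht).1
        have h := congrFun (congrFun this pp) qq
        rw [Matrix.conjTranspose_apply] at h
        exact h
      have h3 : Tendsto (fun t : ℝ => ((t : ℂ) • (φ ∘ₗ inv t))
          (Matrix.of fun a b => A (pp.1, a) (qq.1, b)) pp.2 qq.2) atTop
          (nhds (star (L (Matrix.of fun a b => A (qq.1, a) (pp.1, b)) qq.2 pp.2))) :=
        h1.congr' h2
      exact tendsto_nhds_unique h3 (htendE pp qq)
    · -- positivity
      intro x
      have hsum : Tendsto (fun t : ℝ => dotProduct (star x)
          ((Matrix.of fun pp qq : Fin k × Fin n =>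
            ((t : ℂ) • (φ ∘ₗ inv t)) (Matrix.of fun a b => A (pp.1, a) (qq.1, b)) pp.2 qq.2) *ᵥ x))
          atTop (nhds (dotProduct (star x)
          ((Matrix.of fun pp qq : Fin k × Fin n =>
            L (Matrix.of fun a b => A (pp.1, a) (qq.1, b)) pp.2 qq.2) *ᵥ x))) := by
        simp only [dotProduct, Matrix.mulVec, Matrix.of_apply]
        apply tendsto_finset_sum
        intro pp _
        apply Tendsto.const_mul
        apply tendsto_finset_sum
        intro qq _
        exact (htendE pp qq).mul tendsto_const_nhds
      refine ge_of_tendsto hsum ?_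
      filter_upwards [eventually_ge_atTop (0 : ℝ)] with t ht
      exact (hBt t ht).dotProduct_mulVec_nonneg x
  -- norm of L is 1
  have hnormL : ‖toC L‖ = 1 := by
    have hle : ‖toC L‖ ≤ 1 :=
      le_of_tendsto htend.norm
        (eventually_atTop.mpr ⟨1, fun t ht => (hnorm t (lt_of_lt_of_le one_pos ht)).le⟩)
    have hL0 : L ≠ 0 := by
      intro h
      apply hφ0
      rw [← hφL, h, LinearMap.comp_zero]
    have hc0 : toC L ≠ 0 := by
      intro h
      exact hL0 (toC_injective (by rw [h]; rfl))
    have h2 : 0 < ‖toC L‖ := by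
      rcases (norm_nonneg (toC L)).lt_or_eq with h | h
      · exact h
      · exact absurd ((ContinuousLinearMap.opNorm_zero_iff (toC L)).mp h.symm) hc0
    have h3 : ‖toC L‖ ≤ ‖toC L‖ * ‖toC L‖ := by
      calc ‖toC L‖ = ‖toC (L ∘ₗ L)‖ := by rw [hLL]
        _ = ‖(toC L).comp (toC L)‖ := by rw [toC_comp]
        _ ≤ ‖toC L‖ * ‖toC L‖ := ContinuousLinearMap.opNorm_comp_le _ _
    nlinarith
  refine ⟨L, htend, ?_, hCPL, hnormL, hLφ, hφL, hLL, hrangeL, hkerL⟩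
  intro L' hL'
  exact toC_injective (tendsto_nhds_unique hL' htend)
end
end

section
/- Let Φ : M₂(ℂ) → M₂(ℂ) be a unital completely positive map with Φ² = Φ. Then, up to conjugation by a unitary (i.e., replacing Φ by A ↦ U*Φ(UAU*)U for a unitary U), Φ has one of the following forms: (i) Φ(A) = ρ(A)I for a state ρ on M₂(ℂ); (ii) Φ is the diagonal map Φ(A) = a₁₁e₁₁ + a₂₂e₂₂; (iii) Φ is the identity map. -/
open Matrix Filter
open scoped Matrix.Norms.L2Operator ComplexOrder

noncomputable section

abbrev M2 := Matrix (Fin 2) (Fin 2) ℂ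

def e2 (i j : Fin 2) : M2 := Matrix.single i j 1

lemma matrix_decomp (M : M2) :
    M = M 0 0 • e2 0 0 + M 0 1 • e2 0 1 + M 1 0 • e2 1 0 + M 1 1 • e2 1 1 := by
  ext i j
  fin_cases i <;> fin_cases j <;> simp [e2, Matrix.single]

lemma phi_expand (Φ : M2 →ₗ[ℂ] M2) (M : M2) :
    Φ M = M 0 0 • Φ (e2 0 0) + M 0 1 • Φ (e2 0 1) + M 1 0 • Φ (e2 1 0) + M 1 1 • Φ (e2 1 1) := by
  conv_lhs => rw [matrix_decomp M]
  simp

lemma outer_psd {n : Type*} [Fintype n] (v : n → ℂ) :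
    (Matrix.of fun p q => v p * star (v q)).PosSemidef := by
  have h : (Matrix.of fun p q => v p * star (v q))
      = (Matrix.of fun (_ : Fin 1) q => star (v q))ᴴ * (Matrix.of fun (_ : Fin 1) q => star (v q)) := by
    ext p q
    simp [Matrix.mul_apply, Matrix.conjTranspose_apply]
  rw [h]
  exact Matrix.posSemidef_conjTranspose_mul_self _

lemma psd_diag_nonneg {n : Type*} [Fintype n] [DecidableEq n] {M : Matrix n n ℂ}
    (hM : M.PosSemidef) (i : n) : 0 ≤ M i i := by
  exact hM.diag_nonneg

lemma psd_entry_zero {n : Type*} [Fintype n] [DecidableEq n] {M : Matrix n n ℂ}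
    (hM : M.PosSemidef) {p : n} (hp : M p p = 0) (q : n) : M p q = 0 ∧ M q p = 0 := by
  obtain ⟨B, hB⟩ : ∃ B : Matrix n n ℂ, M = Bᴴ * B := by
    open scoped MatrixOrder in
    obtain ⟨B, hB⟩ := CStarAlgebra.nonneg_iff_eq_star_mul_self.mp hM.nonneg
    exact ⟨B, hB⟩
  subst hB
  have h1 : ∀ k, star (B k p) * B k p = (Complex.normSq (B k p) : ℂ) := fun k => by
    rw [Complex.star_def, Complex.normSq_eq_conj_mul_self]
  have h2 : ((∑ k, Complex.normSq (B k p) : ℝ) : ℂ) = 0 := by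
    push_cast
    rw [← hp]
    simp [Matrix.mul_apply, Matrix.conjTranspose_apply, h1, Complex.star_def,
      Complex.normSq_eq_conj_mul_self]
  have h3 : ∀ k, B k p = 0 := by
    intro k
    have := (Finset.sum_eq_zero_iff_of_nonneg (fun k _ => Complex.normSq_nonneg (B k p))).mp
      (Complex.ofReal_eq_zero.mp h2) k (Finset.mem_univ k)
    exact Complex.normSq_eq_zero.mp this
  constructor <;>
    simp [Matrix.mul_apply, Matrix.conjTranspose_apply, h3, Complex.star_def,
      Complex.normSq_eq_conj_mul_self]

lemma conjMap_apply_aux' (Φ : M2 →ₗ[ℂ] M2) (U A : M2) :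
    conjMap Φ U A = Uᴴ * Φ (U * A * Uᴴ) * U := rfl

def Choi (Φ : M2 →ₗ[ℂ] M2) : Matrix (Fin 2 × Fin 2) (Fin 2 × Fin 2) ℂ :=
  Matrix.of fun p q => Φ (Matrix.single p.1 q.1 1) p.2 q.2

lemma choi_conj_psd (Φ : M2 →ₗ[ℂ] M2) (hcp : IsCompletelyPositive Φ) (U : M2) :
    (Choi (conjMap Φ U)).PosSemidef := by
  set A : Matrix (Fin 2 × Fin 2) (Fin 2 × Fin 2) ℂ :=
    Matrix.of fun p q => U p.2 p.1 * star (U q.2 q.1) with hAdef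
  have hA : A.PosSemidef := outer_psd _
  have hOut := hcp 2 A hA
  set Out : Matrix (Fin 2 × Fin 2) (Fin 2 × Fin 2) ℂ :=
    Matrix.of fun p q : Fin 2 × Fin 2 =>
      Φ (Matrix.of fun a b => A (p.1, a) (q.1, b)) p.2 q.2 with hOutdef
  set W : Matrix (Fin 2 × Fin 2) (Fin 2 × Fin 2) ℂ :=
    Matrix.of fun p q => if p.1 = q.1 then U p.2 q.2 else 0 with hWdef
  have hblk : ∀ k l : Fin 2,
      (Matrix.of fun a b => A ((k, a)) ((l, b))) = U * Matrix.single k l 1 * Uᴴ := by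
    intro k l
    ext a b
    simp [hAdef, Matrix.mul_apply, Matrix.single, Matrix.conjTranspose_apply,
      Fin.sum_univ_two]
    fin_cases k <;> fin_cases l <;> simp [mul_comm]
  have key : Choi (conjMap Φ U) = Wᴴ * Out * W := by
    ext ⟨i, a⟩ ⟨j, b⟩
    show (conjMap Φ U) (Matrix.single i j 1) a b = _
    rw [conjMap_apply_aux']
    simp only [hWdef, hOutdef, hblk]
    simp only [Matrix.mul_apply, Matrix.conjTranspose_apply, Matrix.of_apply,
      Fintype.sum_prod_type, Fin.sum_univ_two]
    fin_cases i <;> fin_cases j <;> simp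
  rw [key]
  exact hOut.conjTranspose_mul_mul_same W

lemma choi_psd (Φ : M2 →ₗ[ℂ] M2) (hcp : IsCompletelyPositive Φ) : (Choi Φ).PosSemidef := by
  have h := choi_conj_psd Φ hcp 1
  have : Choi (conjMap Φ 1) = Choi Φ := by
    ext ⟨i, a⟩ ⟨j, b⟩
    simp [Choi, conjMap_apply_aux']
  rwa [this] at h

lemma key_branch (Φ : M2 →ₗ[ℂ] M2) (hunital : Φ 1 = 1) (hcp : IsCompletelyPositive Φ)
    (hidem : ∀ X, Φ (Φ X) = Φ X) (H : M2) (hH : H.IsHermitian) (hfix : Φ H = H)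
    (hns : ∀ c : ℂ, H ≠ c • 1) :
    ∃ U ∈ Matrix.unitaryGroup (Fin 2) ℂ,
      (∀ A, conjMap Φ U A = Matrix.diagonal fun i => A i i) ∨ (∀ A, conjMap Φ U A = A) := by
  set U : M2 := (hH.eigenvectorUnitary : M2) with hUdef
  have hUmem : U ∈ Matrix.unitaryGroup (Fin 2) ℂ := SetLike.coe_mem _
  have hUU' : U * Uᴴ = 1 := Matrix.mem_unitaryGroup_iff.mp hUmem
  have hU'U : Uᴴ * U = 1 := Matrix.mem_unitaryGroup_iff'.mp hUmem
  set D : M2 := Matrix.diagonal (fun i => (hH.eigenvalues i : ℂ)) with hDdef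
  have hspec : H = U * D * Uᴴ := hH.spectral_theorem
  have hlam : hH.eigenvalues 0 ≠ hH.eigenvalues 1 := by
    intro hEq
    apply hns ((hH.eigenvalues 0 : ℂ))
    have hDD : D = (hH.eigenvalues 0 : ℂ) • 1 := by
      ext i j
      fin_cases i <;> fin_cases j <;>
        simp [hDdef, Matrix.diagonal, hEq, Matrix.one_apply]
    refine hspec.trans ?_
    rw [hDD, Matrix.mul_smul, Matrix.mul_one, Matrix.smul_mul, hUU']
  set Φ' : M2 →ₗ[ℂ] M2 := conjMap Φ U with hΦ'def
  have hΦ'apply : ∀ A, Φ' A = Uᴴ * Φ (U * A * Uᴴ) * U := fun A => rfl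
  have hΦ'1 : Φ' 1 = 1 := by
    rw [hΦ'apply, Matrix.mul_one, hUU', hunital, Matrix.mul_one, hU'U]
  have hΦ'D : Φ' D = D := by
    rw [hΦ'apply, show U * D * Uᴴ = H from hspec.symm, hfix, hspec]
    have h : Uᴴ * (U * D * Uᴴ) * U = (Uᴴ * U) * D * (Uᴴ * U) := by
      simp only [Matrix.mul_assoc]
    rw [h, hU'U, Matrix.one_mul, Matrix.mul_one]
  have hne : ((hH.eigenvalues 0 : ℂ) - (hH.eigenvalues 1 : ℂ)) ≠ 0 := by
    simpa [sub_eq_zero] using hlam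
  have hE00eq : e2 0 0
      = ((hH.eigenvalues 0 : ℂ) - (hH.eigenvalues 1 : ℂ))⁻¹ • (D - (hH.eigenvalues 1 : ℂ) • 1) := by
    ext i j
    fin_cases i <;> fin_cases j <;>
      simp [e2, Matrix.single, hDdef, Matrix.diagonal, Matrix.one_apply,
        Matrix.smul_apply, Matrix.sub_apply]
    rw [inv_mul_cancel₀ hne]
  have hΦ'E00 : Φ' (e2 0 0) = e2 0 0 := by
    rw [hE00eq]
    simp only [_root_.map_smul, map_sub, hΦ'D, hΦ'1]
  have hE11eq : e2 1 1 = 1 - e2 0 0 := by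
    ext i j
    fin_cases i <;> fin_cases j <;> simp [e2, Matrix.single, Matrix.one_apply]
  have hΦ'E11 : Φ' (e2 1 1) = e2 1 1 := by
    rw [hE11eq, map_sub, hΦ'1, hΦ'E00]
  have hC : (Choi Φ').PosSemidef := choi_conj_psd Φ hcp U
  have hc1 : Choi Φ' ((0 : Fin 2), (1 : Fin 2)) ((0 : Fin 2), (1 : Fin 2)) = 0 := by
    show Φ' (Matrix.single 0 0 1) 1 1 = 0
    rw [show (Matrix.single 0 0 1 : M2) = e2 0 0 from rfl, hΦ'E00]
    simp [e2, Matrix.single]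
  have hc2 : Choi Φ' ((1 : Fin 2), (0 : Fin 2)) ((1 : Fin 2), (0 : Fin 2)) = 0 := by
    show Φ' (Matrix.single 1 1 1) 0 0 = 0
    rw [show (Matrix.single 1 1 1 : M2) = e2 1 1 from rfl, hΦ'E11]
    simp [e2, Matrix.single]
  have hz10 : Φ' (e2 0 1) 1 0 = 0 := (psd_entry_zero hC hc1 ((1 : Fin 2), (0 : Fin 2))).1
  have hz11 : Φ' (e2 0 1) 1 1 = 0 := (psd_entry_zero hC hc1 ((1 : Fin 2), (1 : Fin 2))).1
  have hz00 : Φ' (e2 0 1) 0 0 = 0 := (psd_entry_zero hC hc2 ((0 : Fin 2), (0 : Fin 2))).2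
  set β : ℂ := Φ' (e2 0 1) 0 1 with hβdef
  have hB : Φ' (e2 0 1) = β • e2 0 1 := by
    ext i j
    fin_cases i <;> fin_cases j
    · show Φ' (e2 0 1) 0 0 = (β • e2 0 1) 0 0
      rw [show ((β • e2 0 1) 0 0 : ℂ) = 0 by simp [e2, Matrix.single]]
      exact hz00
    · show Φ' (e2 0 1) 0 1 = (β • e2 0 1) 0 1
      rw [show ((β • e2 0 1) 0 1 : ℂ) = β by simp [e2, Matrix.single]]
    · show Φ' (e2 0 1) 1 0 = (β • e2 0 1) 1 0
      rw [show ((β • e2 0 1) 1 0 : ℂ) = 0 by simp [e2, Matrix.single]]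
      exact hz10
    · show Φ' (e2 0 1) 1 1 = (β • e2 0 1) 1 1
      rw [show ((β • e2 0 1) 1 1 : ℂ) = 0 by simp [e2, Matrix.single]]
      exact hz11
  have hΦ'E10 : Φ' (e2 1 0) = star β • e2 1 0 := by
    have hh : ∀ a b : Fin 2, Φ' (e2 1 0) a b = star (Φ' (e2 0 1) b a) := by
      intro a b
      have h := congrFun (congrFun hC.1 ((1 : Fin 2), a)) ((0 : Fin 2), b)
      rw [Matrix.conjTranspose_apply] at h
      exact h.symm
    ext a b
    rw [hh a b, hB]
    fin_cases a <;> fin_cases b <;> simp [e2, Matrix.single]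
  have hΦ'Φ' : ∀ A, Φ' (Φ' A) = Φ' A := by
    intro A
    rw [hΦ'apply (Φ' A), hΦ'apply A]
    have h : U * (Uᴴ * Φ (U * A * Uᴴ) * U) * Uᴴ = Φ (U * A * Uᴴ) := by
      have h2 : U * (Uᴴ * Φ (U * A * Uᴴ) * U) * Uᴴ = (U * Uᴴ) * Φ (U * A * Uᴴ) * (U * Uᴴ) := by
        simp only [Matrix.mul_assoc]
      rw [h2, hUU', Matrix.one_mul, Matrix.mul_one]
    rw [h, hidem]
  have hββ : β * β = β := by
    have h1 : Φ' (Φ' (e2 0 1)) = Φ' (e2 0 1) := hΦ'Φ' _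
    rw [hB, _root_.map_smul, hB, smul_smul] at h1
    have h2 := congrFun (congrFun h1 0) 1
    simpa [e2, Matrix.single, Matrix.smul_apply] using h2
  have hβ01 : β = 0 ∨ β = 1 := by
    have h : β * (β - 1) = 0 := by ring_nf; linear_combination hββ
    rcases mul_eq_zero.mp h with h | h
    · exact Or.inl h
    · exact Or.inr (sub_eq_zero.mp h)
  refine ⟨U, hUmem, ?_⟩
  rcases hβ01 with hβ | hβ
  · left
    intro A
    show Φ' A = _
    rw [phi_expand Φ' A, hΦ'E00, hB, hΦ'E10, hΦ'E11, hβ]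
    ext i j
    fin_cases i <;> fin_cases j <;>
      simp [e2, Matrix.single, Matrix.diagonal]
  · right
    intro A
    show Φ' A = A
    rw [phi_expand Φ' A, hΦ'E00, hB, hΦ'E10, hΦ'E11, hβ]
    simp only [star_one, one_smul]
    exact (matrix_decomp A).symm


lemma phi_pos (Φ : M2 →ₗ[ℂ] M2) (hcp : IsCompletelyPositive Φ) {M : M2}
    (hM : M.PosSemidef) : (Φ M).PosSemidef := by
  have hA : (Matrix.of fun p q : Fin 1 × Fin 2 => M p.2 q.2).PosSemidef :=
    hM.submatrix (Prod.snd : Fin 1 × Fin 2 → Fin 2)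
  have h := hcp 1 _ hA
  have h2 : (Φ M) = (Matrix.of fun p q : Fin 1 × Fin 2 =>
      Φ (Matrix.of fun a b => (Matrix.of fun p q : Fin 1 × Fin 2 => M p.2 q.2) (p.1, a) (q.1, b))
        p.2 q.2).submatrix (fun i : Fin 2 => ((0 : Fin 1), i)) (fun i : Fin 2 => ((0 : Fin 1), i)) :=
    rfl
  rw [h2]
  exact h.submatrix _

/-- classification of unital completely positive idempotents on
`M₂(ℂ)` up to unitary conjugation. -/
theorem stmt_5
    (Φ : Matrix (Fin 2) (Fin 2) ℂ →ₗ[ℂ] Matrix (Fin 2) (Fin 2) ℂ)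
    (hunital : Φ 1 = 1) (hcp : IsCompletelyPositive Φ) (hidem : Φ ∘ₗ Φ = Φ) :
    ∃ U ∈ Matrix.unitaryGroup (Fin 2) ℂ,
      (∃ ρ : Matrix (Fin 2) (Fin 2) ℂ →ₗ[ℂ] ℂ, IsState ρ ∧
        ∀ A, conjMap Φ U A = ρ A • (1 : Matrix (Fin 2) (Fin 2) ℂ)) ∨
      (∀ A, conjMap Φ U A = Matrix.diagonal fun i => A i i) ∨
      (∀ A, conjMap Φ U A = A) := by
  have hidem' : ∀ X, Φ (Φ X) = Φ X := by
    intro X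
    have h := LinearMap.ext_iff.mp hidem X
    simpa using h
  have hCpsd := choi_psd Φ hcp
  have hherm : ∀ i j a b : Fin 2, Φ (e2 i j) a b = star (Φ (e2 j i) b a) := by
    intro i j a b
    have h := congrFun (congrFun hCpsd.1 ((i, a))) ((j, b))
    rw [Matrix.conjTranspose_apply] at h
    exact h.symm
  by_cases hall : ∀ i j : Fin 2, ∃ c : ℂ, Φ (e2 i j) = c • 1
  · refine ⟨1, one_mem _, Or.inl ?_⟩
    refine ⟨{ toFun := fun A => Φ A 0 0,
              map_add' := fun A B => by simp [map_add],
              map_smul' := fun c A => by simp [_root_.map_smul] }, ⟨?_, ?_⟩, ?_⟩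
    · show Φ 1 0 0 = 1
      rw [hunital]
      simp [Matrix.one_apply]
    · intro A hA
      have hpos := phi_pos Φ hcp hA
      have h0 : (0 : ℂ) ≤ Φ A 0 0 := psd_diag_nonneg hpos 0
      rw [Complex.nonneg_iff] at h0
      refine ⟨(Φ A 0 0).re, h0.1, ?_⟩
      show Φ A 0 0 = ((Φ A 0 0).re : ℂ)
      exact Complex.ext rfl (by simp [← h0.2])
    · intro A
      have hconj : conjMap Φ 1 A = Φ A := by
        rw [conjMap_apply_aux']
        simp
      obtain ⟨c, hc⟩ : ∃ c, Φ A = c • 1 := by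
        obtain ⟨c00, h00⟩ := hall 0 0
        obtain ⟨c01, h01⟩ := hall 0 1
        obtain ⟨c10, h10⟩ := hall 1 0
        obtain ⟨c11, h11⟩ := hall 1 1
        refine ⟨A 0 0 * c00 + A 0 1 * c01 + A 1 0 * c10 + A 1 1 * c11, ?_⟩
        rw [phi_expand Φ A, h00, h01, h10, h11]
        simp [smul_smul, add_smul]
      have hc0 : Φ A 0 0 = c := by
        rw [hc]
        simp [Matrix.smul_apply, Matrix.one_apply]
      show conjMap Φ 1 A = Φ A 0 0 • 1
      rw [hconj, hc0, hc]
  · push_neg at hall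
    obtain ⟨i, j, hij⟩ := hall
    set P : M2 := Φ (e2 0 0) with hPdef
    set B : M2 := Φ (e2 0 1) with hBdef
    have hPh : P.IsHermitian := by
      ext a b
      rw [Matrix.conjTranspose_apply]
      exact (hherm 0 0 a b).symm
    have hB10 : Φ (e2 1 0) = Bᴴ := by
      ext a b
      rw [Matrix.conjTranspose_apply]
      exact hherm 1 0 a b
    have hPfix : Φ P = P := hidem' _
    have hBfix : Φ B = B := hidem' _
    have hBHfix : Φ Bᴴ = Bᴴ := by rw [← hB10]; exact hidem' _
    have hsum : e2 0 0 + e2 1 1 = (1 : M2) := by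
      ext a b
      fin_cases a <;> fin_cases b <;> simp [e2, Matrix.single, Matrix.one_apply]
    have hE11P : Φ (e2 1 1) = 1 - P := by
      have h : Φ (e2 0 0 + e2 1 1) = P + Φ (e2 1 1) := map_add Φ _ _
      rw [hsum, hunital] at h
      rw [eq_sub_iff_add_eq, add_comm]
      exact h.symm
    have hPns : (∀ c : ℂ, P ≠ c • 1) → ∃ H : M2, H.IsHermitian ∧ Φ H = H ∧ ∀ c : ℂ, H ≠ c • 1 :=
      fun h => ⟨P, hPh, hPfix, h⟩
    have hBns : (∀ c : ℂ, B ≠ c • 1) → ∃ H : M2, H.IsHermitian ∧ Φ H = H ∧ ∀ c : ℂ, H ≠ c • 1 := by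
      intro hns
      by_cases h2 : ∀ c : ℂ, B + Bᴴ ≠ c • 1
      · refine ⟨B + Bᴴ, ?_, ?_, h2⟩
        · show (B + Bᴴ)ᴴ = B + Bᴴ
          rw [Matrix.conjTranspose_add, Matrix.conjTranspose_conjTranspose, add_comm]
        · rw [map_add, hBfix, hBHfix]
      · push_neg at h2
        obtain ⟨c, hc⟩ := h2
        have hstarI : star Complex.I = -Complex.I := by
          simp [Complex.star_def, Complex.conj_I]
        refine ⟨Complex.I • B - Complex.I • Bᴴ, ?_, ?_, ?_⟩
        · show (Complex.I • B - Complex.I • Bᴴ)ᴴ = _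
          rw [Matrix.conjTranspose_sub, Matrix.conjTranspose_smul, Matrix.conjTranspose_smul,
            Matrix.conjTranspose_conjTranspose, hstarI]
          module
        · rw [map_sub, _root_.map_smul, _root_.map_smul, hBfix, hBHfix]
        · intro d hd
          apply hns ((c - Complex.I * d) / 2)
          have h2B : (2 : ℂ) • B = c • (1 : M2) - Complex.I • (d • (1 : M2)) := by
            rw [← hc, ← hd, smul_sub, smul_smul, smul_smul, Complex.I_mul_I]
            module
          have hB2 : B = (2 : ℂ)⁻¹ • ((2 : ℂ) • B) := by
            rw [smul_smul]
            norm_num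
          rw [hB2, h2B, smul_sub, smul_smul, smul_smul, smul_smul, ← sub_smul]
          congr 1
          ring
    have hex : ∃ H : M2, H.IsHermitian ∧ Φ H = H ∧ ∀ c : ℂ, H ≠ c • 1 := by
      fin_cases i <;> fin_cases j
      · exact hPns hij
      · exact hBns hij
      · apply hBns
        intro c hcc
        apply hij (star c)
        show Φ (e2 1 0) = star c • 1
        rw [hB10, hcc, Matrix.conjTranspose_smul, Matrix.conjTranspose_one]
      · apply hPns
        intro c hcc
        apply hij (1 - c)
        show Φ (e2 1 1) = (1 - c) • 1
        rw [hE11P, hcc, sub_smul, one_smul]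
    obtain ⟨H, hH, hfix, hns⟩ := hex
    obtain ⟨U, hU, hcase⟩ := key_branch Φ hunital hcp hidem' H hH hfix hns
    exact ⟨U, hU, Or.inr hcase⟩
end
end

section
/- The map φ : M₂(ℂ) → M₂(ℂ) defined by φ(A) = (1/3)·[[2a₁₁ + a₂₂, a₁₂ + a₂₁],[a₁₂ + a₂₁, a₁₁ + 2a₂₂]] is unital, completely positive, and has rank 3, but is not q-positive. -/
open Matrix Filter
open scoped Matrix.Norms.L2Operator ComplexOrder

noncomputable section

/-- The explicit rank-3 unital completely positive map of STATEMENT 7. -/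
def phi7 : Matrix (Fin 2) (Fin 2) ℂ →ₗ[ℂ] Matrix (Fin 2) (Fin 2) ℂ where
  toFun A := (1 / 3 : ℂ) •
    !![2 * A 0 0 + A 1 1, A 0 1 + A 1 0; A 0 1 + A 1 0, A 0 0 + 2 * A 1 1]
  map_add' A B := by
    ext i j
    fin_cases i <;> fin_cases j <;> simp [Matrix.add_apply] <;> ring
  map_smul' c A := by
    ext i j
    fin_cases i <;> fin_cases j <;> simp [Matrix.smul_apply] <;> ring


lemma psd_smul_aux {n : Type*} [Fintype n] {M : Matrix n n ℂ} (hM : M.PosSemidef)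
    {c : ℂ} (hc : 0 ≤ c) : (c • M).PosSemidef := by
  have hcr : star c = c := by
    rw [Complex.star_def, Complex.conj_eq_iff_im]
    exact ((Complex.le_def).mp hc).2.symm
  refine Matrix.PosSemidef.of_dotProduct_mulVec_nonneg ?_ ?_
  · unfold Matrix.IsHermitian
    rw [Matrix.conjTranspose_smul, hcr, hM.1.eq]
  · intro x
    rw [Matrix.smul_mulVec, dotProduct_smul, smul_eq_mul]
    exact mul_nonneg hc (hM.dotProduct_mulVec_nonneg x)

theorem phi7_unital : phi7 1 = 1 := by
  ext i j
  fin_cases i <;> fin_cases j <;>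
    simp [phi7, Matrix.one_apply] <;> norm_num

theorem phi7_cp : IsCompletelyPositive phi7 := by
  intro k A hA
  set σ : Fin k × Fin 2 → Fin k × Fin 2 := fun p => (p.1, if p.2 = 0 then 1 else 0) with hσ
  set d : Fin k × Fin 2 → ℂ := fun p => if p.2 = 0 then 1 else -1 with hd
  have key : (Matrix.of fun p q : Fin k × Fin 2 =>
      phi7 (Matrix.of fun a b => A (p.1, a) (q.1, b)) p.2 q.2) =
      (1/2 : ℂ) • A + (1/3 : ℂ) • A.submatrix σ σ +
      (1/6 : ℂ) • (Matrix.diagonal d * A * (Matrix.diagonal d)ᴴ) := by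
    ext p q
    obtain ⟨p1, p2⟩ := p
    obtain ⟨q1, q2⟩ := q
    have hdd : (Matrix.diagonal d * A * (Matrix.diagonal d)ᴴ) (p1,p2) (q1,q2)
        = d (p1,p2) * A (p1,p2) (q1,q2) * star (d (q1,q2)) := by
      rw [Matrix.diagonal_conjTranspose, Matrix.mul_diagonal, Matrix.diagonal_mul,
        Pi.star_apply]
    fin_cases p2 <;> fin_cases q2 <;>
      simp [phi7, hdd, hσ, hd, Matrix.add_apply, Matrix.smul_apply,
        Matrix.submatrix_apply] <;> ring
  rw [key]
  have h1 : (0:ℂ) ≤ 1/2 := by norm_num [Complex.le_def]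
  have h2 : (0:ℂ) ≤ 1/3 := by norm_num [Complex.le_def]
  have h3 : (0:ℂ) ≤ 1/6 := by norm_num [Complex.le_def]
  exact ((psd_smul_aux hA h1).add (psd_smul_aux (hA.submatrix σ) h2)).add
    (psd_smul_aux (hA.mul_mul_conjTranspose_same _) h3)

theorem phi7_rank : Module.finrank ℂ (LinearMap.range phi7) = 3 := by
  have hker : LinearMap.ker phi7 = ℂ ∙ (!![0,1;-1,0] : Matrix (Fin 2) (Fin 2) ℂ) := by
    ext A
    simp only [LinearMap.mem_ker, Submodule.mem_span_singleton]
    constructor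
    · intro h
      have he := Matrix.ext_iff.mpr h
      have h00 := he 0 0
      have h11 := he 1 1
      have h01 := he 0 1
      simp [phi7, Matrix.zero_apply] at h00 h11 h01
      have ha : A 0 0 = 0 := by linear_combination (2*h00 - h11)/3
      have hb : A 1 1 = 0 := by linear_combination (2*h11 - h00)/3
      have hc : A 1 0 = - A 0 1 := by linear_combination h01
      refine ⟨A 0 1, ?_⟩
      ext i j
      fin_cases i <;> fin_cases j <;> simp [Matrix.smul_apply, ha, hb, hc]
    · rintro ⟨c, rfl⟩
      rw [_root_.map_smul]
      have : phi7 !![0,1;-1,0] = 0 := by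
        ext i j
        fin_cases i <;> fin_cases j <;> simp [phi7]
      rw [this, smul_zero]
  have hv : (!![0,1;-1,0] : Matrix (Fin 2) (Fin 2) ℂ) ≠ 0 := by
    intro h
    have := Matrix.ext_iff.mpr h 0 1
    simp at this
  have hk1 : Module.finrank ℂ (LinearMap.ker phi7) = 1 := by
    rw [hker]; exact finrank_span_singleton hv
  have := LinearMap.finrank_range_add_finrank_ker phi7
  rw [hk1] at this
  have h4 : Module.finrank ℂ (Matrix (Fin 2) (Fin 2) ℂ) = 4 := by
    simp [Module.finrank_matrix]
  omega

theorem phi7_not_q : ¬ QPositive phi7 := by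
  rintro ⟨-, h⟩
  obtain ⟨ψ, ⟨-, h2⟩, hcp⟩ := h 3 (by norm_num)
  have hψ : ∀ X : Matrix (Fin 2) (Fin 2) ℂ, ψ (X + ((3:ℝ):ℂ) • phi7 X) = X := by
    intro X
    have := LinearMap.ext_iff.mp h2 X
    simpa [LinearMap.comp_apply, LinearMap.add_apply, LinearMap.smul_apply] using this
  set A : Matrix (Fin 2 × Fin 2) (Fin 2 × Fin 2) ℂ := Matrix.of fun p q =>
    (if p.1 = p.2 then 1 else 0) * (if q.1 = q.2 then 1 else 0) with hAdef
  have hA : A.PosSemidef := by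
    have key : A = (Matrix.of fun (_ : Fin 1) (p : Fin 2 × Fin 2) =>
        (if p.1 = p.2 then (1:ℂ) else 0))ᴴ *
        (Matrix.of fun (_ : Fin 1) (p : Fin 2 × Fin 2) =>
        (if p.1 = p.2 then (1:ℂ) else 0)) := by
      ext p q
      simp [Matrix.mul_apply, Matrix.conjTranspose_apply, apply_ite (star : ℂ → ℂ),
        Fin.sum_univ_one, hAdef]
    rw [key]
    exact Matrix.posSemidef_conjTranspose_mul_self _
  have hpsd := hcp 2 A hA
  have b00 : ψ (Matrix.of fun a b => A ((0:Fin 2), a) ((0:Fin 2), b))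
      = !![3/8, 0; 0, -1/8] := by
    have : (Matrix.of fun a b => A ((0:Fin 2), a) ((0:Fin 2), b))
        = !![3/8, 0; 0, -1/8] + ((3:ℝ):ℂ) • phi7 !![3/8, 0; 0, -1/8] := by
      ext a b
      fin_cases a <;> fin_cases b <;>
        simp [hAdef, phi7, Matrix.add_apply, Matrix.smul_apply] <;> norm_num
    rw [this, hψ]
  have b01 : ψ (Matrix.of fun a b => A ((0:Fin 2), a) ((1:Fin 2), b))
      = !![0, 2/3; -1/3, 0] := by
    have : (Matrix.of fun a b => A ((0:Fin 2), a) ((1:Fin 2), b))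
        = !![0, 2/3; -1/3, 0] + ((3:ℝ):ℂ) • phi7 !![0, 2/3; -1/3, 0] := by
      ext a b
      fin_cases a <;> fin_cases b <;>
        simp [hAdef, phi7, Matrix.add_apply, Matrix.smul_apply] <;> norm_num
    rw [this, hψ]
  have b10 : ψ (Matrix.of fun a b => A ((1:Fin 2), a) ((0:Fin 2), b))
      = !![0, -1/3; 2/3, 0] := by
    have : (Matrix.of fun a b => A ((1:Fin 2), a) ((0:Fin 2), b))
        = !![0, -1/3; 2/3, 0] + ((3:ℝ):ℂ) • phi7 !![0, -1/3; 2/3, 0] := by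
      ext a b
      fin_cases a <;> fin_cases b <;>
        simp [hAdef, phi7, Matrix.add_apply, Matrix.smul_apply] <;> norm_num
    rw [this, hψ]
  have b11 : ψ (Matrix.of fun a b => A ((1:Fin 2), a) ((1:Fin 2), b))
      = !![-1/8, 0; 0, 3/8] := by
    have : (Matrix.of fun a b => A ((1:Fin 2), a) ((1:Fin 2), b))
        = !![-1/8, 0; 0, 3/8] + ((3:ℝ):ℂ) • phi7 !![-1/8, 0; 0, 3/8] := by
      ext a b
      fin_cases a <;> fin_cases b <;>
        simp [hAdef, phi7, Matrix.add_apply, Matrix.smul_apply] <;> norm_num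
    rw [this, hψ]
  set x : Fin 2 × Fin 2 → ℂ := fun p =>
    if p = (0, 1) then 1 else if p = (1, 0) then -1 else 0 with hx
  have hval := hpsd.dotProduct_mulVec_nonneg x
  set N : Matrix (Fin 2 × Fin 2) (Fin 2 × Fin 2) ℂ := Matrix.of fun p q =>
    (phi7 ∘ₗ ψ) (Matrix.of fun a b => A (p.1, a) (q.1, b)) p.2 q.2 with hN
  have expand : dotProduct (star x) (N *ᵥ x)
      = N (0,1) (0,1) - N (0,1) (1,0) - N (1,0) (0,1) + N (1,0) (1,0) := by
    simp [dotProduct, Matrix.mulVec, Fintype.sum_prod_type, Fin.sum_univ_two,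
      hx, apply_ite (star : ℂ → ℂ), Prod.ext_iff]
    ring
  have n1 : N (0,1) (0,1) = 1/24 := by
    show phi7 (ψ _) 1 1 = 1/24
    rw [b00]
    simp [phi7]; norm_num
  have n2 : N (0,1) (1,0) = 1/9 := by
    show phi7 (ψ _) 1 0 = 1/9
    rw [b01]
    simp [phi7]; norm_num
  have n3 : N (1,0) (0,1) = 1/9 := by
    show phi7 (ψ _) 0 1 = 1/9
    rw [b10]
    simp [phi7]; norm_num
  have n4 : N (1,0) (1,0) = 1/24 := by
    show phi7 (ψ _) 0 0 = 1/24
    rw [b11]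
    simp [phi7]; norm_num
  rw [expand, n1, n2, n3, n4] at hval
  rw [Complex.le_def] at hval
  norm_num at hval

/-- `phi7` is unital, completely positive, of rank 3, but not
q-positive. -/
theorem stmt_7 :
    phi7 1 = 1 ∧ IsCompletelyPositive phi7 ∧
      Module.finrank ℂ (LinearMap.range phi7) = 3 ∧ ¬ QPositive phi7 :=
  ⟨phi7_unital, phi7_cp, phi7_rank, phi7_not_q⟩
end
end

section
/- Let K be a separable Hilbert space and φ : B(K) → B(K) a normal unital completely positive map. Suppose φ(E) = E for a projection E, and let F = I − E. Then for all A ∈ B(K), φ(A) = Eφ(EAE)E + Eφ(EAF)F + Fφ(FAE)E + Fφ(FAF)F. -/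
open Matrix Filter
open scoped Matrix.Norms.L2Operator ComplexOrder

noncomputable section

/-- a normal unital CP map fixing a projection `E` decomposes
blockwise with respect to `E` and `F = I - E`. -/
theorem stmt_10 {K : Type*} [NormedAddCommGroup K] [InnerProductSpace ℂ K]
    [CompleteSpace K] [TopologicalSpace.SeparableSpace K]
    (φ : (K →L[ℂ] K) → (K →L[ℂ] K)) (S : ℕ → K →L[ℂ] K)
    (hKraus : ∀ A, HasSum (fun i => S i * A * star (S i)) (φ A))
    (hunital : φ 1 = 1)
    (E : K →L[ℂ] K) (hE1 : star E = E) (hE2 : E * E = E) (hfix : φ E = E) :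
    ∀ A, φ A =
      E * φ (E * A * E) * E + E * φ (E * A * (1 - E)) * (1 - E) +
      (1 - E) * φ ((1 - E) * A * E) * E +
      (1 - E) * φ ((1 - E) * A * (1 - E)) * (1 - E) := by
  have hzero : ∀ (T : ℕ → K →L[ℂ] K), HasSum (fun i => T i * star (T i)) 0 →
      ∀ i, T i = 0 := by
    intro T hT i
    have hx : ∀ x : K, star (T i) x = 0 := by
      intro x
      have h1 : HasSum (fun j => (T j * star (T j)) x) 0 := by
        simpa using (ContinuousLinearMap.apply ℂ K x).hasSum hT
      have h2 : HasSum (fun j => (inner ℂ x ((T j * star (T j)) x) : ℂ)) 0 := by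
        simpa using (innerSL ℂ x).hasSum h1
      have heq : ∀ j, (inner ℂ x ((T j * star (T j)) x) : ℂ) = ((‖star (T j) x‖^2 : ℝ) : ℂ) := by
        intro j
        rw [ContinuousLinearMap.mul_apply, ContinuousLinearMap.star_eq_adjoint,
          ← ContinuousLinearMap.adjoint_inner_left, inner_self_eq_norm_sq_to_K]
        norm_cast
      rw [funext heq] at h2
      have h3 : HasSum (fun j => (‖star (T j) x‖^2 : ℝ)) 0 := by
        simpa [← Complex.ofReal_pow] using Complex.reCLM.hasSum h2
      have h4 : (‖star (T i) x‖^2 : ℝ) ≤ 0 := le_hasSum h3 i (fun j _ => sq_nonneg _)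
      have : ‖star (T i) x‖ = 0 := by nlinarith [norm_nonneg (star (T i) x)]
      simpa using this
    have h0 : star (T i) = 0 := by ext x; simpa using hx x
    calc T i = star (star (T i)) := (star_star _).symm
    _ = 0 := by rw [h0]; simp
  set F : K →L[ℂ] K := 1 - E with hFdef
  have hF1 : star F = F := by simp [hFdef, star_sub, hE1]
  have hEF : E * F = 0 := by simp [hFdef, mul_sub, hE2]
  have hFE : F * E = 0 := by simp [hFdef, sub_mul, hE2]
  have hFF : F * F = F := by rw [hFdef]; simp [mul_sub, sub_mul, hE2]
  have hKrausE : HasSum (fun i => S i * E * star (S i)) E := by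
    simpa only [hfix] using hKraus E
  have hKraus1 : HasSum (fun i => S i * star (S i)) 1 := by
    simpa [hunital] using hKraus 1
  have hKrausF : HasSum (fun i => S i * F * star (S i)) F := by
    have h := hKraus1.sub hKrausE
    have heq : (fun i => S i * star (S i) - S i * E * star (S i))
        = fun i => S i * F * star (S i) := by
      funext i; rw [hFdef, mul_sub, mul_one, sub_mul]
    rwa [heq] at h
  have hFSE : ∀ i, F * S i * E = 0 := by
    have h := (hKrausE.mul_left F).mul_right F
    rw [show F * E * F = 0 by rw [hFE]; simp] at h
    have heq : (fun i => F * (S i * E * star (S i)) * F)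
        = fun i => (F * S i * E) * star (F * S i * E) := by
      funext i
      simp only [StarMul.star_mul, hF1, hE1]
      simp only [mul_assoc]
      conv_rhs => rw [← mul_assoc E E, hE2]
    rw [heq] at h
    exact hzero _ h
  have hESF : ∀ i, E * S i * F = 0 := by
    have h := (hKrausF.mul_left E).mul_right E
    rw [show E * F * E = 0 by rw [hEF]; simp] at h
    have heq : (fun i => E * (S i * F * star (S i)) * E)
        = fun i => (E * S i * F) * star (E * S i * F) := by
      funext i
      simp only [StarMul.star_mul, hF1, hE1]
      simp only [mul_assoc]
      conv_rhs => rw [← mul_assoc F F, hFF]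
    rw [heq] at h
    exact hzero _ h
  have hcomm : ∀ i, S i * E = E * S i := by
    intro i
    have h1 : S i * E = E * S i * E := by
      have h := hFSE i
      rw [hFdef, sub_mul, sub_mul, one_mul, sub_eq_zero] at h
      exact h
    have h2 : E * S i = E * S i * E := by
      have h := hESF i
      rw [hFdef, mul_sub, mul_one, sub_eq_zero] at h
      exact h
    exact h1.trans h2.symm
  have hcommF : ∀ i, S i * F = F * S i := by
    intro i; rw [hFdef, mul_sub, sub_mul, mul_one, one_mul, hcomm]
  have hcommE' : ∀ i, star (S i) * E = E * star (S i) := by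
    intro i
    have h := congrArg star (hcomm i)
    rwa [StarMul.star_mul, StarMul.star_mul, hE1, eq_comm] at h
  have hcommF' : ∀ i, star (S i) * F = F * star (S i) := by
    intro i
    have h := congrArg star (hcommF i)
    rwa [StarMul.star_mul, StarMul.star_mul, hF1, eq_comm] at h
  have hmain : ∀ (P Q : K →L[ℂ] K), (∀ i, S i * P = P * S i) →
      (∀ i, star (S i) * Q = Q * star (S i)) →
      ∀ A, φ (P * A * Q) = P * φ A * Q := by
    intro P Q hP hQ A
    have h1 := ((hKraus A).mul_left P).mul_right Q
    have heq : (fun i => S i * (P * A * Q) * star (S i))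
        = fun i => P * (S i * A * star (S i)) * Q := by
      funext i
      calc S i * (P * A * Q) * star (S i)
          = (S i * P) * (A * (Q * star (S i))) := by simp only [mul_assoc]
        _ = (P * S i) * (A * (star (S i) * Q)) := by rw [hP i, ← hQ i]
        _ = P * (S i * A * star (S i)) * Q := by simp only [mul_assoc]
    rw [← heq] at h1
    exact (hKraus _).unique h1
  intro A
  rw [hmain E E hcomm hcommE' A, hmain E F hcomm hcommF' A,
    hmain F E hcommF hcommE' A, hmain F F hcommF hcommF' A]
  have e1 : E * (E * φ A * E) * E = E * φ A * E := by
    rw [show E * (E * φ A * E) * E = (E * E) * φ A * (E * E) from by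
      simp only [mul_assoc], hE2]
  have e2 : E * (E * φ A * F) * F = E * φ A * F := by
    rw [show E * (E * φ A * F) * F = (E * E) * φ A * (F * F) from by
      simp only [mul_assoc], hE2, hFF]
  have e3 : F * (F * φ A * E) * E = F * φ A * E := by
    rw [show F * (F * φ A * E) * E = (F * F) * φ A * (E * E) from by
      simp only [mul_assoc], hE2, hFF]
  have e4 : F * (F * φ A * F) * F = F * φ A * F := by
    rw [show F * (F * φ A * F) * F = (F * F) * φ A * (F * F) from by
      simp only [mul_assoc], hFF]
  rw [e1, e2, e3, e4]
  have hsum : E + F = 1 := by rw [hFdef]; abel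
  calc φ A = (E + F) * φ A * (E + F) := by rw [hsum]; simp
    _ = E * φ A * E + E * φ A * F + F * φ A * E + F * φ A * F := by
        simp only [add_mul, mul_add]; abel
end
end

section
/- Let Θ : M₄(ℂ) → M₄(ℂ) be a completely positive map of block form Θ([[A,B],[C,D]]) = [[φ₂(A), γ(B)],[γ*(C), φ₃(D)]] where φ₂ : M₂(ℂ) → M₂(ℂ) is the diagonal map φ₂(A) = a₁₁e₁₁ + a₂₂e₂₂ and φ₃ : M₂(ℂ) → M₂(ℂ) is a unital Schur map. Then γ : M₂(ℂ) → M₂(ℂ) is a Schur map, i.e., γ(e_{ij}) is a scalar multiple of e_{ij} for all i,j. -/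
open Matrix Filter
open scoped Matrix.Norms.L2Operator ComplexOrder

noncomputable section

-- ===== auxiliary lemmas =====

lemma psd_row_col_zero {m : Type*} [Fintype m] [DecidableEq m] {M : Matrix m m ℂ}
    (hM : M.PosSemidef) (r : m) (h : M r r = 0) (s : m) : M r s = 0 ∧ M s r = 0 := by
  have hx : star (Pi.single r (1:ℂ)) ⬝ᵥ M *ᵥ Pi.single r 1 = 0 := by
    simp [Matrix.mulVec_single, dotProduct, Pi.single_apply, h]
  have hcol := (hM.dotProduct_mulVec_zero_iff _).mp hx
  have hsr : M s r = 0 := by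
    have := congrFun hcol s
    simpa [Matrix.mulVec_single] using this
  refine ⟨?_, hsr⟩
  have := congrFun (congrFun hM.1 s) r
  rw [Matrix.conjTranspose_apply] at this
  have h2 : star (M r s) = 0 := this.trans hsr
  simpa using congrArg star h2

lemma cp_posMap {n : Type*} [Fintype n] [DecidableEq n]
    {Θ : Matrix n n ℂ →ₗ[ℂ] Matrix n n ℂ} (hcp : IsCompletelyPositive Θ)
    {P : Matrix n n ℂ} (hP : P.PosSemidef) : (Θ P).PosSemidef := by
  have h := hcp 1 (P.submatrix Prod.snd Prod.snd) (hP.submatrix _)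
  exact h.submatrix (fun x : n => ((0 : Fin 1), x))

/-- a corner from the diagonal map to a unital Schur map is a
Schur map. -/
theorem stmt_18
    (φ₃ : Matrix (Fin 2) (Fin 2) ℂ →ₗ[ℂ] Matrix (Fin 2) (Fin 2) ℂ)
    (W : Matrix (Fin 2) (Fin 2) ℂ) (hφ₃ : ∀ A, φ₃ A = Matrix.hadamard W A)
    (hφ₃u : φ₃ 1 = 1)
    (γ : Matrix (Fin 2) (Fin 2) ℂ →ₗ[ℂ] Matrix (Fin 2) (Fin 2) ℂ)
    (hcp : IsCompletelyPositive (cornerMap diagMap φ₃ γ)) :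
    ∃ Y : Matrix (Fin 2) (Fin 2) ℂ, ∀ A, γ A = Matrix.hadamard Y A := by
  classical
  have key : ∀ (i j a b : Fin 2), (a ≠ i ∨ b ≠ j) →
      γ (Matrix.single i j 1) a b = 0 := by
    intro i j a b hab
    set v : (Fin 2 ⊕ Fin 2) → ℂ :=
      fun r => if r = Sum.inl i then 1 else if r = Sum.inr j then 1 else 0 with hv
    set X : Matrix (Fin 2 ⊕ Fin 2) (Fin 1) ℂ := Matrix.of fun a _ => v a with hX
    set P : Matrix (Fin 2 ⊕ Fin 2) (Fin 2 ⊕ Fin 2) ℂ := X * Xᴴ with hPdef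
    have hentry : ∀ a b, P a b = v a * star (v b) := by
      intro a b; simp [hPdef, Matrix.mul_apply, hX]
    have hP : P.PosSemidef := Matrix.posSemidef_self_mul_conjTranspose X
    have hΘP := cp_posMap hcp hP
    have hblock : P.toBlocks₁₂ = Matrix.single i j 1 := by
      ext a b
      have he : P.toBlocks₁₂ a b = v (Sum.inl a) * star (v (Sum.inr b)) := hentry _ _
      rw [he]
      simp only [hv, Matrix.single, Matrix.of_apply, Sum.inl.injEq,
        Sum.inr.injEq, reduceCtorEq, if_false]
      rcases eq_or_ne a i with rfl | h1
      · rcases eq_or_ne b j with rfl | h2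
        · simp
        · simp [h2, Ne.symm h2]
      · simp [h1, Ne.symm h1]
    have hγent : (cornerMap diagMap φ₃ γ) P (Sum.inl a) (Sum.inr b)
        = γ (Matrix.single i j 1) a b := by
      rw [← hblock]; rfl
    rcases hab with h | h
    · have hdiag : (cornerMap diagMap φ₃ γ) P (Sum.inl a) (Sum.inl a) = 0 := by
        show Matrix.diagonal (fun k => P.toBlocks₁₁ k k) a a = 0
        simp [Matrix.toBlocks₁₁, hentry, hv, h]
      have := (psd_row_col_zero hΘP (Sum.inl a) hdiag (Sum.inr b)).1
      rw [hγent] at this; exact this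
    · have hdiag : (cornerMap diagMap φ₃ γ) P (Sum.inr b) (Sum.inr b) = 0 := by
        show φ₃ P.toBlocks₂₂ b b = 0
        rw [hφ₃]
        simp [Matrix.hadamard, Matrix.toBlocks₂₂, hentry, hv, h]
      have := (psd_row_col_zero hΘP (Sum.inr b) hdiag (Sum.inl a)).2
      rw [hγent] at this; exact this
  refine ⟨Matrix.of fun i j => γ (Matrix.single i j 1) i j, fun A => ?_⟩
  ext a b
  have hE : ∀ (i j : Fin 2) (c : ℂ),
      Matrix.single i j c = c • Matrix.single i j 1 := by
    intro i j c; ext a b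
    simp only [Matrix.single, Matrix.of_apply, Matrix.smul_apply, smul_eq_mul]
    split <;> simp
  conv_lhs => rw [Matrix.matrix_eq_sum_single A]
  simp only [map_sum, Matrix.sum_apply]
  have hterm : ∀ i j, γ (Matrix.single i j (A i j)) a b
      = A i j * γ (Matrix.single i j 1) a b := by
    intro i j
    rw [hE i j (A i j), LinearMap.map_smul, Matrix.smul_apply, smul_eq_mul]
  simp only [hterm]
  rw [Finset.sum_eq_single a]
  · rw [Finset.sum_eq_single b]
    · simp [Matrix.hadamard]; ring
    · intro j _ hj
      rw [key a j a b (Or.inr (Ne.symm hj))]; ring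
    · intro h; exact absurd (Finset.mem_univ b) h
  · intro i _ hi
    apply Finset.sum_eq_zero
    intro j _
    rw [key i j a b (Or.inl (Ne.symm hi))]; ring
  · intro h; exact absurd (Finset.mem_univ a) h
end
end
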